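/- arXiv:2105.10531 — 4 statements merged into one kernel-verified Lean document; each statement's English description precedes it below -/
import Mathlib

section
/- Let 𝒜 be an abelian category and (𝒟, ℰ) a cotorsion pair with enough injectives. If every object of 𝒜 is a quotient of an object in 𝒟, then (𝒟, ℰ) is complete, i.e. it also has enough projectives. Dually, if (𝒟, ℰ) has enough projectives and every object of 𝒜 is a subobject of an object in ℰ, then (𝒟, ℰ) is complete. -/
open CategoryTheory CategoryTheory.Limits CategoryTheory.Abelian

universe w v u

/-- `(𝒟, ℰ)` is a cotorsion pair on the abelian category `C`. -/
def IsCotorsionPair {C : Type u} [Category.{v} C] [Abelian C] [HasExt.{w} C]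
    (𝒟 ℰ : Set C) : Prop :=
  (∀ X : C, X ∈ 𝒟 ↔ ∀ Y ∈ ℰ, Subsingleton (Ext X Y 1)) ∧
  (∀ Y : C, Y ∈ ℰ ↔ ∀ X ∈ 𝒟, Subsingleton (Ext X Y 1))

/-- The cotorsion pair `(𝒟, ℰ)` has enough injectives: every object `X` fits in a short
exact sequence `0 → X → E → D → 0` with `E ∈ ℰ` and `D ∈ 𝒟`. -/
def CPHasEnoughInjectives {C : Type u} [Category.{v} C] [Abelian C]
    (𝒟 ℰ : Set C) : Prop :=
  ∀ X : C, ∃ (E D : C) (i : X ⟶ E) (p : E ⟶ D) (w : i ≫ p = 0),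
    (ShortComplex.mk i p w).ShortExact ∧ E ∈ ℰ ∧ D ∈ 𝒟

/-- The cotorsion pair `(𝒟, ℰ)` has enough projectives: every object `X` fits in a short
exact sequence `0 → E → D → X → 0` with `E ∈ ℰ` and `D ∈ 𝒟`. -/
def CPHasEnoughProjectives {C : Type u} [Category.{v} C] [Abelian C]
    (𝒟 ℰ : Set C) : Prop :=
  ∀ X : C, ∃ (E D : C) (i : E ⟶ D) (p : D ⟶ X) (w : i ≫ p = 0),
    (ShortComplex.mk i p w).ShortExact ∧ E ∈ ℰ ∧ D ∈ 𝒟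

/-- The cotorsion pair `(𝒟, ℰ)` is complete: it has enough injectives and enough
projectives. -/
def CPIsComplete {C : Type u} [Category.{v} C] [Abelian C] (𝒟 ℰ : Set C) : Prop :=
  CPHasEnoughInjectives 𝒟 ℰ ∧ CPHasEnoughProjectives 𝒟 ℰ

section Helpers

variable {C : Type u} [Category.{v} C] [Abelian C]

/-- Pushout of a short exact sequence along a map out of the first object. -/
lemma shortExact_of_isPushout {S : ShortComplex C} (hS : S.ShortExact)
    {M P : C} (u : S.X₁ ⟶ M) {a : S.X₂ ⟶ P} {b : M ⟶ P}
    (sq : IsPushout S.f u a b) :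
    (ShortComplex.mk b (sq.desc S.g 0 (by rw [S.zero, comp_zero]))
      (sq.inr_desc _ _ _)).ShortExact := by
  have := hS.mono_f
  have := hS.epi_g
  set π : P ⟶ S.X₃ := sq.desc S.g 0 (by rw [S.zero, comp_zero]) with hπ
  have ha : a ≫ π = S.g := sq.inl_desc _ _ _
  have hb : b ≫ π = 0 := sq.inr_desc _ _ _
  have hepi : Epi π := by
    have : Epi (a ≫ π) := by rw [ha]; infer_instance
    exact epi_of_epi a π
  have hmono : Mono b := by
    rw [← sq.inr_isoPushout_inv]
    infer_instance
  have hcolim : IsColimit (CokernelCofork.ofπ π hb) :=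
    CokernelCofork.IsColimit.ofπ' π hb (fun {T} t ht => by
      obtain ⟨l, hl⟩ := CokernelCofork.IsColimit.desc' hS.gIsCokernel (a ≫ t)
        (by rw [← Category.assoc, sq.w, Category.assoc, ht, comp_zero])
      refine ⟨l, ?_⟩
      apply sq.hom_ext
      · rw [← Category.assoc, ha]; exact hl
      · rw [← Category.assoc, hb, zero_comp, ht])
  exact { exact := ShortComplex.exact_of_g_is_cokernel _ hcolim,
          mono_f := hmono, epi_g := hepi }

/-- Pullback of a short exact sequence along a map into the last object. -/
lemma shortExact_of_isPullback {S : ShortComplex C} (hS : S.ShortExact)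
    {M P : C} (u : M ⟶ S.X₃) {a : P ⟶ S.X₂} {b : P ⟶ M}
    (sq : IsPullback a b S.g u) :
    (ShortComplex.mk (sq.lift S.f 0 (by rw [S.zero, zero_comp])) b
      (sq.lift_snd _ _ _)).ShortExact := by
  have := hS.mono_f
  have := hS.epi_g
  set ι : S.X₁ ⟶ P := sq.lift S.f 0 (by rw [S.zero, zero_comp]) with hι
  have ha : ι ≫ a = S.f := sq.lift_fst _ _ _
  have hb : ι ≫ b = 0 := sq.lift_snd _ _ _
  have hmono : Mono ι := by
    have : Mono (ι ≫ a) := by rw [ha]; infer_instance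
    exact mono_of_mono ι a
  have hepi : Epi b := by
    rw [← sq.isoPullback_hom_snd]
    infer_instance
  have hlim : IsLimit (KernelFork.ofι ι hb) :=
    KernelFork.IsLimit.ofι' ι hb (fun {T} t ht => by
      obtain ⟨l, hl⟩ := KernelFork.IsLimit.lift' hS.fIsKernel (t ≫ a)
        (by rw [Category.assoc, sq.w, ← Category.assoc, ht, zero_comp])
      refine ⟨l, ?_⟩
      apply sq.hom_ext
      · rw [Category.assoc, ha]; exact hl
      · rw [Category.assoc, hb, comp_zero, ht])
  exact { exact := ShortComplex.exact_of_f_is_kernel _ hlim,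
          mono_f := hmono, epi_g := hepi }

variable [HasExt.{w} C]

end Helpers


section Helpers2
variable {C : Type u} [Category.{v} C] [Abelian C] [HasExt.{w} C]

lemma mem_D_of_shortExact {𝒟 ℰ : Set C} (h : IsCotorsionPair 𝒟 ℰ)
    {S : ShortComplex C} (hS : S.ShortExact) (h1 : S.X₁ ∈ 𝒟) (h3 : S.X₃ ∈ 𝒟) :
    S.X₂ ∈ 𝒟 := by
  rw [h.1]
  intro Y hY
  have s1 := (h.1 S.X₁).mp h1 Y hY
  have s3 := (h.1 S.X₃).mp h3 Y hY
  constructor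
  intro x₂ x₂'
  suffices hz : ∀ x : Ext S.X₂ Y 1, x = 0 by rw [hz x₂, hz x₂']
  intro x
  obtain ⟨x₁, hx₁⟩ := Ext.contravariant_sequence_exact₂ hS Y x
    (by rw [Subsingleton.elim ((Ext.mk₀ S.f).comp x (zero_add 1)) 0])
  rw [← hx₁, Subsingleton.elim x₁ 0, Ext.comp_zero]

lemma mem_E_of_shortExact {𝒟 ℰ : Set C} (h : IsCotorsionPair 𝒟 ℰ)
    {S : ShortComplex C} (hS : S.ShortExact) (h1 : S.X₁ ∈ ℰ) (h3 : S.X₃ ∈ ℰ) :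
    S.X₂ ∈ ℰ := by
  rw [h.2]
  intro X hX
  have s1 := (h.2 S.X₁).mp h1 X hX
  have s3 := (h.2 S.X₃).mp h3 X hX
  constructor
  intro x₂ x₂'
  suffices hz : ∀ x : Ext X S.X₂ 1, x = 0 by rw [hz x₂, hz x₂']
  intro x
  obtain ⟨x₁, hx₁⟩ := Ext.covariant_sequence_exact₂ X hS x
    (by rw [Subsingleton.elim (x.comp (Ext.mk₀ S.g) (add_zero 1)) 0])
  rw [← hx₁, Subsingleton.elim x₁ 0, Ext.zero_comp]

end Helpers2

/-- If a cotorsion pair has enough injectives and every object is a quotient of an object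
of `𝒟`, then it is complete; dually with enough projectives and subobjects of objects
of `ℰ`. -/
theorem cotorsionPair_complete_of_enough_of_one_side
    {C : Type u} [Category.{v} C] [Abelian C] [HasExt.{w} C]
    (𝒟 ℰ : Set C) (h : IsCotorsionPair 𝒟 ℰ) :
    (CPHasEnoughInjectives 𝒟 ℰ →
      (∀ X : C, ∃ D ∈ 𝒟, ∃ p : D ⟶ X, Epi p) → CPIsComplete 𝒟 ℰ) ∧
    (CPHasEnoughProjectives 𝒟 ℰ →
      (∀ X : C, ∃ E ∈ ℰ, ∃ i : X ⟶ E, Mono i) → CPIsComplete 𝒟 ℰ) := by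
  constructor
  · intro hInj hQuot
    refine ⟨hInj, fun X => ?_⟩
    obtain ⟨D, hD, p, hp⟩ := hQuot X
    have hS₀ : (ShortComplex.mk (kernel.ι p) p (kernel.condition p)).ShortExact :=
      { exact := ShortComplex.exact_of_f_is_kernel _ (kernelIsKernel p),
        mono_f := inferInstance, epi_g := hp }
    obtain ⟨E, D', i, q, w₁, hS₁, hE, hD'⟩ := hInj (kernel p)
    have sq := IsPushout.of_hasPushout (kernel.ι p) i
    have hA := shortExact_of_isPushout hS₀ i sq
    have hB := shortExact_of_isPushout hS₁ (kernel.ι p) sq.flip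
    have hP : pushout (kernel.ι p) i ∈ 𝒟 := mem_D_of_shortExact h hB hD hD'
    exact ⟨E, pushout (kernel.ι p) i, pushout.inr _ _, _, _, hA, hE, hP⟩
  · intro hProj hSub
    refine ⟨fun X => ?_, hProj⟩
    obtain ⟨E, hE, i, hi⟩ := hSub X
    have hS₀ : (ShortComplex.mk i (cokernel.π i) (cokernel.condition i)).ShortExact :=
      { exact := ShortComplex.exact_of_g_is_cokernel _ (cokernelIsCokernel i),
        mono_f := hi, epi_g := inferInstance }
    obtain ⟨E', D, j, p, w₁, hS₁, hE', hD⟩ := hProj (cokernel i)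
    have sq := IsPullback.of_hasPullback (cokernel.π i) p
    have hA := shortExact_of_isPullback hS₀ p sq
    have hB := shortExact_of_isPullback hS₁ (cokernel.π i) sq.flip
    have hP : pullback (cokernel.π i) p ∈ ℰ := mem_E_of_shortExact h hB hE' hE
    exact ⟨pullback (cokernel.π i) p, D, _, pullback.snd _ _, _, hA, hP, hD⟩
end

section
/- Let (𝒟, ℰ) be a cotorsion pair on an abelian category 𝒜. (1) If 𝒟 is resolving and each object of 𝒜 is a quotient of an object in 𝒟, then Ext²(D, E) = 0 for all D ∈ 𝒟 and E ∈ ℰ. (2) If ℰ is coresolving and each object of 𝒜 is a subobject of an object in ℰ, then Ext²(D, E) = 0 for all D ∈ 𝒟 and E ∈ ℰ. -/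
open CategoryTheory CategoryTheory.Limits CategoryTheory.Abelian

universe w v u

section AuxLemmas

variable {C : Type u} [Category.{v} C] [Abelian C] [HasExt.{w} C]

open HomologicalComplex DerivedCategory

lemma exists_epi_precomp_eq_zero {X Y : C} (ξ : Ext X Y 2) :
    ∃ (T : C) (q : T ⟶ X), Epi q ∧ (Ext.mk₀ q).comp ξ (zero_add 2) = 0 := by
  letI := HasDerivedCategory.standard C
  haveI : (HomotopyCategory.quasiIso C (ComplexShape.up ℤ)).HasRightCalculusOfFractions := by
    rw [HomotopyCategory.quasiIso_eq_subcategoryAcyclic_W]; infer_instance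
  set W := HomotopyCategory.quasiIso C (ComplexShape.up ℤ) with hW
  set quot := HomotopyCategory.quotient C (ComplexShape.up ℤ) with hquot
  set a : ℤ := ((2 : ℕ) : ℤ) with ha
  set SX₀ := (HomologicalComplex.single C (ComplexShape.up ℤ) 0).obj X with hSX
  set SY₀ := (HomologicalComplex.single C (ComplexShape.up ℤ) 0).obj Y with hSY
  -- the comparison iso
  let e1 : Qh.obj (quot.obj (SY₀⟦a⟧)) ⟶ ((singleFunctor C 0).obj Y)⟦a⟧ :=
    Qh.map ((quot.commShiftIso a).hom.app SY₀) ≫ (Qh.commShiftIso a).hom.app (quot.obj SY₀)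
  haveI : IsIso e1 := by
    exact (Qh.mapIso ((quot.commShiftIso a).app SY₀) ≪≫ (Qh.commShiftIso a).app (quot.obj SY₀)).isIso_hom
  let ξ' : Qh.obj (quot.obj SX₀) ⟶ Qh.obj (quot.obj (SY₀⟦a⟧)) := ξ.hom ≫ inv e1
  obtain ⟨φ, hφ⟩ := Localization.exists_rightFraction Qh W ξ'
  obtain ⟨s₀, hs₀⟩ := quot.map_surjective
    (show quot.obj φ.X'.as ⟶ quot.obj SX₀ from φ.s)
  obtain ⟨f₀, hf₀⟩ := quot.map_surjective
    (show quot.obj φ.X'.as ⟶ quot.obj (SY₀⟦a⟧) from φ.f)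
  have hs₀' : quot.map s₀ = φ.s := hs₀
  have hf₀' : quot.map f₀ = φ.f := hf₀
  haveI hqis : QuasiIso s₀ := by
    rw [← HomologicalComplex.mem_quasiIso_iff,
      ← HomotopyCategory.quotient_map_mem_quasiIso_iff, hs₀']
    exact φ.hs
  -- homology isos on the single complex
  have hf0 : (SX₀.sc 0).f = 0 := single_obj_d (ComplexShape.up ℤ) 0 X _ _
  have hg0 : (SX₀.sc 0).g = 0 := single_obj_d (ComplexShape.up ℤ) 0 X _ _
  haveI hπ : IsIso (SX₀.homologyπ 0) := ShortComplex.isIso_homologyπ _ hf0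
  haveI hiC : IsIso (SX₀.iCycles 0) := ShortComplex.isIso_iCycles _ hg0
  let isoX : SX₀.homology 0 ≅ X :=
    (asIso (SX₀.homologyπ 0)).symm ≪≫ asIso (SX₀.iCycles 0) ≪≫
      singleObjXSelf (ComplexShape.up ℤ) 0 X
  haveI : IsIso (homologyMap s₀ 0) := by
    rw [← quasiIsoAt_iff_isIso_homologyMap]; infer_instance
  let q : φ.X'.as.cycles 0 ⟶ X := φ.X'.as.homologyπ 0 ≫ homologyMap s₀ 0 ≫ isoX.hom
  haveI : Epi (φ.X'.as.homologyπ 0) := by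
    infer_instance
  haveI hq : Epi q := epi_comp _ _
  -- the chain map u from the single complex of cycles
  let u : (HomologicalComplex.single C (ComplexShape.up ℤ) 0).obj (φ.X'.as.cycles 0) ⟶ φ.X'.as :=
    mkHomFromSingle (φ.X'.as.iCycles 0) (fun i _ => φ.X'.as.iCycles_d 0 i)
  -- key chain-level identity
  have key : u ≫ s₀ = (HomologicalComplex.single C (ComplexShape.up ℤ) 0).map q := by
    apply from_single_hom_ext
    rw [HomologicalComplex.comp_f, mkHomFromSingle_f, single_map_f_self]
    simp only [Category.assoc]
    congr 1
    show φ.X'.as.iCycles 0 ≫ s₀.f 0 = q ≫ (singleObjXSelf (ComplexShape.up ℤ) 0 X).inv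
    have h1 : q ≫ (singleObjXSelf (ComplexShape.up ℤ) 0 X).inv =
        φ.X'.as.homologyπ 0 ≫ homologyMap s₀ 0 ≫ inv (SX₀.homologyπ 0) ≫ SX₀.iCycles 0 := by
      simp [q, isoX]
    rw [h1, HomologicalComplex.homologyπ_naturality_assoc]
    simp [HomologicalComplex.cyclesMap_i]
  have key2 : u ≫ f₀ = 0 := by
    apply from_single_hom_ext
    apply (isZero_single_obj_X (ComplexShape.up ℤ) 0 Y ((0:ℤ) + a) (by decide)).eq_of_tgt
  have h1 : Qh.map φ.s ≫ ξ.hom = Qh.map φ.f ≫ e1 := by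
    have h2 := φ.map_s_comp_map Qh (Localization.inverts Qh W)
    rw [← hφ] at h2
    have h3 : Qh.map φ.s ≫ ξ.hom ≫ inv e1 = Qh.map φ.f := h2
    rw [← h3]
    exact congrArg (fun k => Qh.map φ.s ≫ k) ((Category.assoc ξ.hom (inv e1) e1).trans ((congrArg (fun k => ξ.hom ≫ k) (IsIso.inv_hom_id e1)).trans (Category.comp_id ξ.hom))).symm |>.trans
      (Category.assoc _ _ _).symm
  have hmain : (singleFunctor C 0).map q ≫ ξ.hom = 0 := by
    have : (singleFunctor C 0).map q =
        Qh.map (quot.map ((HomologicalComplex.single C (ComplexShape.up ℤ) 0).map q)) := rfl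
    erw [this, ← key, Functor.map_comp, Functor.map_comp, Category.assoc, hs₀']
    erw [h1, ← hf₀', ← Functor.map_comp_assoc, ← Functor.map_comp, key2]
    simp
    rfl
  refine ⟨_, q, hq, ?_⟩
  apply Ext.ext
  rw [← Ext.singleFunctor_map_comp_hom, hmain, Ext.zero_hom]

lemma exists_mono_postcomp_eq_zero {X Y : C} (ξ : Ext X Y 2) :
    ∃ (T : C) (j : Y ⟶ T), Mono j ∧ ξ.comp (Ext.mk₀ j) (add_zero 2) = 0 := by
  letI := HasDerivedCategory.standard C
  haveI : (HomotopyCategory.quasiIso C (ComplexShape.up ℤ)).HasLeftCalculusOfFractions := by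
    rw [HomotopyCategory.quasiIso_eq_subcategoryAcyclic_W]; infer_instance
  set W := HomotopyCategory.quasiIso C (ComplexShape.up ℤ) with hW
  set quot := HomotopyCategory.quotient C (ComplexShape.up ℤ) with hquot
  set a : ℤ := ((2 : ℕ) : ℤ) with ha
  set b : ℤ := (-2 : ℤ) with hb
  set SX₀ := (HomologicalComplex.single C (ComplexShape.up ℤ) 0).obj X with hSX
  set SY₀ := (HomologicalComplex.single C (ComplexShape.up ℤ) 0).obj Y with hSY
  let e1 : Qh.obj (quot.obj (SY₀⟦a⟧)) ⟶ ((singleFunctor C 0).obj Y)⟦a⟧ :=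
    Qh.map ((quot.commShiftIso a).hom.app SY₀) ≫ (Qh.commShiftIso a).hom.app (quot.obj SY₀)
  haveI : IsIso e1 := by
    exact (Qh.mapIso ((quot.commShiftIso a).app SY₀) ≪≫ (Qh.commShiftIso a).app (quot.obj SY₀)).isIso_hom
  let ξ' : Qh.obj (quot.obj SX₀) ⟶ Qh.obj (quot.obj (SY₀⟦a⟧)) := ξ.hom ≫ inv e1
  obtain ⟨φ, hφ⟩ := Localization.exists_leftFraction Qh W ξ'
  obtain ⟨f₀, hf₀⟩ := quot.map_surjective
    (show quot.obj SX₀ ⟶ quot.obj φ.Y'.as from φ.f)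
  obtain ⟨s₀, hs₀⟩ := quot.map_surjective
    (show quot.obj (SY₀⟦a⟧) ⟶ quot.obj φ.Y'.as from φ.s)
  have hs₀' : quot.map s₀ = φ.s := hs₀
  have hf₀' : quot.map f₀ = φ.f := hf₀
  haveI hqis : QuasiIso s₀ := by
    rw [← HomologicalComplex.mem_quasiIso_iff,
      ← HomotopyCategory.quotient_map_mem_quasiIso_iff, hs₀']
    exact φ.hs
  -- homology data on the shifted single complex K := SY₀⟦a⟧
  have hf0 : ((SY₀⟦a⟧).sc b).f = 0 := by
    show a.negOnePow • SY₀.d _ _ = 0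
    rw [single_obj_d, smul_zero]
  have hg0 : ((SY₀⟦a⟧).sc b).g = 0 := by
    show a.negOnePow • SY₀.d _ _ = 0
    rw [single_obj_d, smul_zero]
  haveI hι : IsIso ((SY₀⟦a⟧).homologyι b) := ShortComplex.isIso_homologyι _ hg0
  haveI hp : IsIso ((SY₀⟦a⟧).pOpcycles b) := ShortComplex.isIso_pOpcycles _ hf0
  let Xiso : (SY₀⟦a⟧).X b ≅ Y := singleObjXSelf (ComplexShape.up ℤ) 0 Y
  let isoY : (SY₀⟦a⟧).homology b ≅ Y :=
    asIso ((SY₀⟦a⟧).homologyι b) ≪≫ (asIso ((SY₀⟦a⟧).pOpcycles b)).symm ≪≫ Xiso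
  haveI : IsIso (homologyMap s₀ b) := by
    rw [← quasiIsoAt_iff_isIso_homologyMap]; infer_instance
  let T := φ.Y'.as.opcycles b
  let j : Y ⟶ T := isoY.inv ≫ homologyMap s₀ b ≫ φ.Y'.as.homologyι b
  haveI hj : Mono j := mono_comp _ _
  -- the key formula for j
  have hj' : j = Xiso.inv ≫ (SY₀⟦a⟧).pOpcycles b ≫ opcyclesMap s₀ b := by
    have hn : homologyMap s₀ b ≫ φ.Y'.as.homologyι b =
        (SY₀⟦a⟧).homologyι b ≫ opcyclesMap s₀ b := homologyι_naturality s₀ b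
    simp only [j, isoY, Iso.trans_inv, Iso.symm_inv, asIso_hom, asIso_inv,
      Category.assoc, hn, IsIso.inv_hom_id_assoc]
  -- chain maps to the single complex at degree b
  let v : φ.Y'.as ⟶ (HomologicalComplex.single C (ComplexShape.up ℤ) b).obj T :=
    mkHomToSingle (φ.Y'.as.pOpcycles b) (fun i _ => φ.Y'.as.d_pOpcycles i b)
  set ST₀ := (HomologicalComplex.single C (ComplexShape.up ℤ) 0).obj T with hST
  let g₀ : SY₀ ⟶ ST₀ := (HomologicalComplex.single C (ComplexShape.up ℤ) 0).map j
  let Xiso' : (ST₀⟦a⟧).X b ≅ T := singleObjXSelf (ComplexShape.up ℤ) 0 T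
  let v' : ST₀⟦a⟧ ⟶ (HomologicalComplex.single C (ComplexShape.up ℤ) b).obj T :=
    mkHomToSingle Xiso'.hom (fun i _ => by
      show (a.negOnePow • ST₀.d _ _) ≫ _ = 0
      rw [single_obj_d, smul_zero]; exact zero_comp)
  let w' : (HomologicalComplex.single C (ComplexShape.up ℤ) b).obj T ⟶ ST₀⟦a⟧ :=
    mkHomFromSingle Xiso'.inv (fun i _ => by
      show _ ≫ (a.negOnePow • ST₀.d _ _) = 0
      rw [single_obj_d, smul_zero]; exact comp_zero)
  have hv'w' : v' ≫ w' = 𝟙 _ := by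
    ext i
    by_cases hi : i = b
    · subst hi
      rw [HomologicalComplex.comp_f, HomologicalComplex.id_f]
      simp only [v', w', mkHomToSingle_f, mkHomFromSingle_f]
      simp
      exact Xiso'.hom_inv_id
    · apply (isZero_single_obj_X (ComplexShape.up ℤ) 0 T (i + a)
        (fun h => hi (by omega))).eq_of_src
  have hw'v' : w' ≫ v' = 𝟙 _ := by
    apply from_single_hom_ext
    rw [HomologicalComplex.comp_f, HomologicalComplex.id_f]
    simp only [v', w', mkHomToSingle_f, mkHomFromSingle_f]
    simp
    erw [Iso.inv_hom_id_assoc, Iso.hom_inv_id]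
  haveI : IsIso v' := ⟨w', hv'w', hw'v'⟩
  -- the key chain-level identity
  have key1 : s₀ ≫ v = (g₀⟦a⟧') ≫ v' := by
    apply to_single_hom_ext
    rw [HomologicalComplex.comp_f, HomologicalComplex.comp_f]
    simp only [v, v', mkHomToSingle_f]
    rw [← Category.assoc, ← Category.assoc]
    congr 1
    have h2 : (g₀⟦a⟧').f b ≫ Xiso'.hom = (singleObjXSelf (ComplexShape.up ℤ) 0 Y).hom ≫ j := by
      show g₀.f 0 ≫ (singleObjXSelf (ComplexShape.up ℤ) 0 T).hom = _
      rw [single_map_f_self]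
      simp
    rw [h2, hj']
    simp [Xiso]
    exact (p_opcyclesMap s₀ b).symm
  have key2 : f₀ ≫ v = 0 := by
    apply from_single_hom_ext
    apply (isZero_single_obj_X (ComplexShape.up ℤ) b T 0 (by decide)).eq_of_tgt
  -- comparison iso for T and naturality
  let e1T : Qh.obj (quot.obj (ST₀⟦a⟧)) ⟶ ((singleFunctor C 0).obj T)⟦a⟧ :=
    Qh.map ((quot.commShiftIso a).hom.app ST₀) ≫ (Qh.commShiftIso a).hom.app (quot.obj ST₀)
  have hnat : Qh.map (quot.map (g₀⟦a⟧')) ≫ e1T = e1 ≫ ((singleFunctor C 0).map j)⟦a⟧' := by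
    have n1 := (quot.commShiftIso a).hom.naturality g₀
    have n2 := (Qh.commShiftIso a).hom.naturality (quot.map g₀)
    simp only [Functor.comp_map] at n1 n2
    show Qh.map (quot.map (g₀⟦a⟧')) ≫ Qh.map ((quot.commShiftIso a).hom.app ST₀) ≫
        (Qh.commShiftIso a).hom.app (quot.obj ST₀) = _
    rw [← Functor.map_comp_assoc, n1, Functor.map_comp_assoc, n2, ← Category.assoc]
    rfl
  -- conclusion
  have hfr : ξ' ≫ Qh.map φ.s = Qh.map φ.f := by
    have h2 := φ.map_comp_map_s Qh (Localization.inverts Qh W)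
    rw [← hφ] at h2
    exact h2
  have hg₀2 : (g₀⟦a⟧') = s₀ ≫ (v ≫ inv v') := by
    rw [← Category.assoc, key1]
    simp
  have hzero : f₀ ≫ (v ≫ inv v') = 0 := by
    rw [← Category.assoc, key2, zero_comp]
  have goal0 : ξ.hom ≫ ((singleFunctor C 0).map j)⟦a⟧' = 0 := by
    have hξ : ξ.hom = ξ' ≫ e1 := by simp only [ξ']; exact ((Category.assoc ξ.hom (inv e1) e1).trans ((congrArg (fun k => ξ.hom ≫ k) (IsIso.inv_hom_id e1)).trans (Category.comp_id ξ.hom))).symm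
    have hfrA : ∀ {V : DerivedCategory C} (g : _ ⟶ V),
        ξ' ≫ Qh.map φ.s ≫ g = Qh.map φ.f ≫ g := by
      intro V g
      rw [← Category.assoc, hfr]
    erw [hξ, Category.assoc, ← hnat, hg₀2, Functor.map_comp, Functor.map_comp, hs₀']
    simp only [Category.assoc]
    erw [hfrA, ← hf₀', ← Functor.map_comp_assoc, ← Functor.map_comp, hzero]
    simp
    rfl
  refine ⟨T, j, hj, ?_⟩
  apply Ext.ext
  rw [Ext.comp_hom, Ext.mk₀_hom, ShiftedHom.comp_mk₀, Ext.zero_hom]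
  exact goal0

end AuxLemmas

section MainTheorem

variable {C : Type u} [Category.{v} C] [Abelian C] [HasExt.{w} C]

lemma subsingleton_of_forall_eq_zero {X Y : C} {n : ℕ}
    (h : ∀ ξ : Ext X Y n, ξ = 0) : Subsingleton (Ext X Y n) :=
  ⟨fun x y => by rw [h x, h y]⟩

end MainTheorem

open CategoryTheory CategoryTheory.Limits CategoryTheory.Abelian

/-- A class of objects is resolving if it is closed under kernels of epimorphisms. -/
def IsResolving {C : Type u} [Category.{v} C] [Abelian C] (𝒟 : Set C) : Prop :=
  ∀ S : ShortComplex C, S.ShortExact → S.X₂ ∈ 𝒟 → S.X₃ ∈ 𝒟 → S.X₁ ∈ 𝒟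

/-- A class of objects is coresolving if it is closed under cokernels of monomorphisms. -/
def IsCoresolving {C : Type u} [Category.{v} C] [Abelian C] (ℰ : Set C) : Prop :=
  ∀ S : ShortComplex C, S.ShortExact → S.X₁ ∈ ℰ → S.X₂ ∈ ℰ → S.X₃ ∈ ℰ

/-- (1) If `𝒟` is resolving and every object is a quotient of an object of `𝒟`, then
`Ext²(D, E) = 0` for all `D ∈ 𝒟`, `E ∈ ℰ`. (2) If `ℰ` is coresolving and every object is
a subobject of an object of `ℰ`, then `Ext²(D, E) = 0` for all `D ∈ 𝒟`, `E ∈ ℰ`. -/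
theorem ext_two_vanishes_of_resolving_or_coresolving
    {C : Type u} [Category.{v} C] [Abelian C] [HasExt.{w} C]
    (𝒟 ℰ : Set C) (h : IsCotorsionPair 𝒟 ℰ) :
    (IsResolving 𝒟 → (∀ X : C, ∃ D ∈ 𝒟, ∃ p : D ⟶ X, Epi p) →
      ∀ D ∈ 𝒟, ∀ E ∈ ℰ, Subsingleton (Ext D E 2)) ∧
    (IsCoresolving ℰ → (∀ X : C, ∃ E ∈ ℰ, ∃ i : X ⟶ E, Mono i) →
      ∀ D ∈ 𝒟, ∀ E ∈ ℰ, Subsingleton (Ext D E 2)) := by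
  constructor
  · -- Part (1)
    intro hres hgen D hD E hE
    apply subsingleton_of_forall_eq_zero
    intro ξ
    obtain ⟨Y, q', hq', hzero⟩ := exists_epi_precomp_eq_zero ξ
    obtain ⟨P, hP, p, hp⟩ := hgen Y
    have hq : Epi (p ≫ q') := epi_comp p q'
    have hzero2 : (Ext.mk₀ (p ≫ q')).comp ξ (zero_add 2) = 0 := by
      rw [← Ext.mk₀_comp_mk₀, Ext.comp_assoc_of_second_deg_zero, hzero, Ext.comp_zero]
    let S : ShortComplex C := ShortComplex.mk (kernel.ι (p ≫ q')) (p ≫ q')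
      (kernel.condition _)
    have hS : S.ShortExact :=
      { exact := ShortComplex.exact_of_f_is_kernel _ (kernelIsKernel (p ≫ q'))
        mono_f := by dsimp [S]; infer_instance
        epi_g := hq }
    have hK : kernel (p ≫ q') ∈ 𝒟 := hres S hS hP hD
    obtain ⟨x₁, hx₁⟩ := Ext.contravariant_sequence_exact₃ hS E ξ hzero2 (n₀ := 1) rfl
    have : Subsingleton (Ext (kernel (p ≫ q')) E 1) := ((h.1 _).mp hK) E hE
    rw [← hx₁, Subsingleton.elim x₁ 0, Ext.comp_zero]
  · -- Part (2)
    intro hcores hcogen D hD E hE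
    apply subsingleton_of_forall_eq_zero
    intro ξ
    obtain ⟨Y, j', hj', hzero⟩ := exists_mono_postcomp_eq_zero ξ
    obtain ⟨E', hE', i, hi⟩ := hcogen Y
    have hj : Mono (j' ≫ i) := mono_comp j' i
    have hzero2 : ξ.comp (Ext.mk₀ (j' ≫ i)) (add_zero 2) = 0 := by
      rw [← Ext.mk₀_comp_mk₀, ← Ext.comp_assoc_of_second_deg_zero _ _ _ (add_zero 2),
        hzero, Ext.zero_comp]
    let S : ShortComplex C := ShortComplex.mk (j' ≫ i) (cokernel.π (j' ≫ i))
      (cokernel.condition _)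
    have hS : S.ShortExact :=
      { exact := ShortComplex.exact_of_g_is_cokernel _ (cokernelIsCokernel (j' ≫ i))
        mono_f := hj
        epi_g := by dsimp [S]; infer_instance }
    have hC : cokernel (j' ≫ i) ∈ ℰ := hcores S hS hE hE'
    obtain ⟨x₃, hx₃⟩ := Ext.covariant_sequence_exact₁ D hS ξ hzero2 (n₀ := 1) rfl
    have : Subsingleton (Ext D (cokernel (j' ≫ i)) 1) := ((h.1 D).mp hD) _ hC
    rw [← hx₃, Subsingleton.elim x₃ 0, Ext.zero_comp]
end

section
/- Let F : 𝒜 → ℬ be a left adjoint between abelian categories with cotorsion pairs (𝒟, ℰ) on 𝒜 and (𝒟′, ℰ′) on ℬ. Assume 𝒟 is F-right split and F(𝒟) ⊆ 𝒟′. Then for every short exact sequence of cochain complexes 0 → A• → B• → D• → 0 in Ch(𝒜) whose cokernel D• is a 𝒟-complex, the sequence 0 → F(A•) → F(B•) → F(D•) → 0, obtained by applying F degreewise, is a short exact sequence of cochain complexes in Ch(ℬ), and F(D•) is a 𝒟′-complex. -/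
open CategoryTheory CategoryTheory.Limits CategoryTheory.Abelian

universe w w' v v' u u'

/-- A class `𝒮` is `F`-right split if every short exact sequence `0 → X → Y → S → 0` with
`S ∈ 𝒮` remains short exact after applying `F`. -/
def RightSplit {A : Type u} [Category.{v} A] [Abelian A]
    {B : Type u'} [Category.{v'} B] [Abelian B]
    (F : A ⥤ B) [F.PreservesZeroMorphisms] (𝒮 : Set A) : Prop :=
  ∀ S : ShortComplex A, S.ShortExact → S.X₃ ∈ 𝒮 → (S.map F).ShortExact

/-- The class `𝒟̃` of `𝒟`-complexes: acyclic complexes `A` with `Zⁿ A ∈ 𝒟` for all `n`. -/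
def DComplexes {C : Type u} [Category.{v} C] [Abelian C] (𝒟 : Set C) :
    Set (CochainComplex C ℤ) :=
  {A | (∀ n : ℤ, A.ExactAt n) ∧ ∀ n : ℤ, A.cycles n ∈ 𝒟}

section Aux

open HomologicalComplex

/-- Subsingleton of Ext groups is invariant under isomorphism in the first variable. -/
lemma subsingleton_ext_of_iso {C : Type u} [Category.{v} C] [Abelian C] [HasExt.{w} C]
    {X X' Y : C} (e : X ≅ X') (n : ℕ) (hs : Subsingleton (Ext X Y n)) :
    Subsingleton (Ext X' Y n) := by
  constructor
  intro a b
  have key : ∀ (x : Ext X' Y n),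
      x = (Ext.mk₀ e.inv).comp ((Ext.mk₀ e.hom).comp x (zero_add n)) (zero_add n) := by
    intro x
    rw [Ext.mk₀_comp_mk₀_assoc, e.inv_hom_id, Ext.mk₀_id_comp]
  rw [key a, key b,
    Subsingleton.elim ((Ext.mk₀ e.hom).comp a (zero_add n)) ((Ext.mk₀ e.hom).comp b (zero_add n))]

variable {C : Type u} [Category.{v} C] [Abelian C]

/-- The short complex `Zⁿ K → Kⁿ → Zⁿ⁺¹ K`. -/
noncomputable def cyclesSC (K : CochainComplex C ℤ) (n : ℤ) : ShortComplex C :=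
  ShortComplex.mk (K.iCycles n) (K.toCycles n (n + 1)) (by
    rw [← cancel_mono (K.iCycles (n + 1)), Category.assoc, HomologicalComplex.toCycles_i,
      zero_comp, HomologicalComplex.iCycles_d])

/-- `iCycles` is the kernel of `toCycles`. -/
noncomputable def cyclesSCIsKernel (K : CochainComplex C ℤ) (n : ℤ) :
    IsLimit (KernelFork.ofι (cyclesSC K n).f (cyclesSC K n).zero) := by
  refine KernelFork.IsLimit.ofι _ _
    (fun {W} k hk => K.liftCycles k (n + 1) ((ComplexShape.up ℤ).next_eq' (by simp)) ?_)
    (fun {W} k hk => by exact K.liftCycles_i _ _ _ _) (fun {W} k hk m hm => ?_)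
  · have : k ≫ K.d n (n + 1) = (k ≫ K.toCycles n (n + 1)) ≫ K.iCycles (n + 1) := by
      exact ((congrArg (fun f => k ≫ f) (K.toCycles_i n (n + 1))).symm.trans (Category.assoc _ _ _).symm)
    dsimp only [cyclesSC] at hk
    exact this.trans ((congrArg (· ≫ K.iCycles (n + 1)) hk).trans zero_comp)
  · dsimp only [cyclesSC] at hm ⊢
    exact (cancel_mono (K.iCycles n)).mp (hm.trans (K.liftCycles_i _ _ _ _).symm)

lemma cyclesSC_shortExact (K : CochainComplex C ℤ) (n : ℤ) (hK : K.ExactAt (n + 1)) :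
    (cyclesSC K n).ShortExact := by
  have hexact : (cyclesSC K n).Exact :=
    ShortComplex.exact_of_f_is_kernel _ (cyclesSCIsKernel K n)
  have hprev : (ComplexShape.up ℤ).prev (n + 1) = n := (ComplexShape.up ℤ).prev_eq' (by simp)
  have hnext : (ComplexShape.up ℤ).next (n + 1) = n + 1 + 1 :=
    (ComplexShape.up ℤ).next_eq' (by simp)
  rw [K.exactAt_iff' n (n + 1) (n + 1 + 1) hprev hnext,
    ShortComplex.exact_iff_epi_toCycles] at hK
  have heq : K.toCycles n (n + 1) =
      (K.sc' n (n + 1) (n + 1 + 1)).toCycles ≫ (K.cyclesIsoSc' n (n + 1) (n + 1 + 1)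
        hprev hnext).inv := by
    exact (Iso.eq_comp_inv _).mpr (K.toCycles_cyclesIsoSc'_hom n (n + 1) (n + 1 + 1) hprev hnext)
  have hepi : Epi (cyclesSC K n).g := by
    dsimp [cyclesSC]
    rw [heq]
    exact @epi_comp _ _ _ _ _ _ hK _ _
  have hmono : Mono (cyclesSC K n).f := by
    dsimp [cyclesSC]; infer_instance
  exact { exact := hexact }

end Aux

/-- If `𝒟` is `F`-right split and `F(𝒟) ⊆ 𝒟′`, then the degreewise application of `F`
sends a short exact sequence of cochain complexes whose cokernel is a `𝒟`-complex to a
short exact sequence of cochain complexes whose cokernel is a `𝒟′`-complex. -/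
theorem chainF_preserves_trivial_cofibrations
    {A : Type u} [Category.{v} A] [Abelian A] [HasExt.{w} A]
    {B : Type u'} [Category.{v'} B] [Abelian B] [HasExt.{w'} B]
    (F : A ⥤ B) (G : B ⥤ A) [F.Additive] [G.Additive] (adj : F ⊣ G)
    (𝒟 ℰ : Set A) (𝒟' ℰ' : Set B)
    (h : IsCotorsionPair 𝒟 ℰ) (h' : IsCotorsionPair 𝒟' ℰ')
    (hsplit : RightSplit F 𝒟) (hobj : ∀ D ∈ 𝒟, F.obj D ∈ 𝒟')
    (S : ShortComplex (CochainComplex A ℤ)) (hS : S.ShortExact)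
    (hD : S.X₃ ∈ DComplexes 𝒟) :
    (S.map (F.mapHomologicalComplex (ComplexShape.up ℤ))).ShortExact ∧
    (F.mapHomologicalComplex (ComplexShape.up ℤ)).obj S.X₃ ∈ DComplexes 𝒟' := by
  obtain ⟨hacy, hcyc⟩ := hD
  set D := S.X₃ with hDdef
  -- the short exact sequences `0 → Zⁿ D → Dⁿ → Zⁿ⁺¹ D → 0`
  have hT : ∀ n : ℤ, (cyclesSC D n).ShortExact := fun n => cyclesSC_shortExact D n (hacy _)
  -- each `Dⁿ` lies in `𝒟` (closure under extensions)
  have hXD : ∀ n : ℤ, D.X n ∈ 𝒟 := by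
    intro n
    rw [h.1]
    intro Y hY
    have h1 : Subsingleton (Abelian.Ext (D.cycles n) Y 1) := (h.1 _).mp (hcyc n) Y hY
    have h3 : Subsingleton (Abelian.Ext (D.cycles (n + 1)) Y 1) := (h.1 _).mp (hcyc (n + 1)) Y hY
    haveI h1' : Subsingleton (Abelian.Ext ((cyclesSC D n).X₁) Y 1) := h1
    haveI h3' : Subsingleton (Abelian.Ext ((cyclesSC D n).X₃) Y 1) := h3
    constructor
    intro a b
    have key : ∀ x : Abelian.Ext (D.X n) Y 1, x = 0 := by
      intro x
      obtain ⟨x₃, hx₃⟩ := Abelian.Ext.contravariant_sequence_exact₂ (hT n) (Y := Y) x (Subsingleton.elim _ 0)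
      rw [← hx₃, Subsingleton.elim x₃ 0, Ext.comp_zero]; rfl
    rw [key a, key b]
  -- `F` applied to the sequences `0 → Zⁿ D → Dⁿ → Zⁿ⁺¹ D → 0`
  have hTF : ∀ n : ℤ, ((cyclesSC D n).map F).ShortExact :=
    fun n => hsplit _ (hT n) (hcyc (n + 1))
  set FD := (F.mapHomologicalComplex (ComplexShape.up ℤ)).obj D with hFDdef
  -- `F (iCycles n)` is a kernel of `FD.d n (n+1)`
  have hker : ∀ n : ℤ,
      IsLimit (KernelFork.ofι (F.map (D.iCycles n))
        (show F.map (D.iCycles n) ≫ FD.d n (n + 1) = 0 by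
          show F.map (D.iCycles n) ≫ F.map (D.d n (n + 1)) = 0
          rw [← F.map_comp, HomologicalComplex.iCycles_d, F.map_zero])) := by
    intro n
    haveI : Mono ((cyclesSC D n).map F).f := (hTF n).mono_f
    haveI : Mono ((cyclesSC D (n + 1)).map F).f := (hTF (n + 1)).mono_f
    have hk₁ : IsLimit (KernelFork.ofι ((cyclesSC D n).map F).f ((cyclesSC D n).map F).zero) :=
      (hTF n).exact.fIsKernel
    have hmono : Mono (F.map (D.iCycles (n + 1))) := (hTF (n + 1)).mono_f
    exact isKernelCompMono hk₁ (F.map (D.iCycles (n + 1))) (hg := hmono) (by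
      show F.map (D.d n (n + 1)) = F.map (D.toCycles n (n + 1)) ≫ F.map (D.iCycles (n + 1))
      rw [← F.map_comp, HomologicalComplex.toCycles_i])
  -- the comparison isomorphisms `F (Zⁿ D) ≅ Zⁿ FD`
  have hnextn : ∀ n : ℤ, (ComplexShape.up ℤ).next n = n + 1 :=
    fun n => (ComplexShape.up ℤ).next_eq' (by simp)
  let e : ∀ n : ℤ, F.obj (D.cycles n) ≅ FD.cycles n := fun n =>
    IsLimit.conePointUniqueUpToIso (hker n) (FD.cyclesIsKernel n (n + 1) (hnextn n))
  have he : ∀ n : ℤ, (e n).hom ≫ FD.iCycles n = F.map (D.iCycles n) := fun n =>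
    IsLimit.conePointUniqueUpToIso_hom_comp (hker n) (FD.cyclesIsKernel n (n + 1) (hnextn n))
      WalkingParallelPair.zero
  -- `FD.toCycles` factors as `F.map (D.toCycles)` followed by the comparison iso
  have htoCycles : ∀ n : ℤ, FD.toCycles n (n + 1) = F.map (D.toCycles n (n + 1)) ≫
      (e (n + 1)).hom := by
    intro n
    refine (cancel_mono (FD.iCycles (n + 1))).mp ?_
    refine (FD.toCycles_i n (n + 1)).trans ?_
    refine Eq.trans ?_ (Category.assoc _ _ _).symm
    exact ((congrArg (fun g => F.map (D.toCycles n (n + 1)) ≫ g) (he (n + 1))).trans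
      ((F.map_comp _ _).symm.trans (congrArg F.map (D.toCycles_i n (n + 1))))).symm
  have hepiF : ∀ n : ℤ, Epi (F.map (D.toCycles n (n + 1))) := fun n => (hTF n).epi_g
  constructor
  · -- short exactness, degreewise
    rw [HomologicalComplex.shortExact_iff_degreewise_shortExact] at hS ⊢
    intro n
    exact hsplit _ (hS n) (hXD n)
  · constructor
    · -- acyclicity of `FD`
      intro n
      have key : ∀ m : ℤ, FD.ExactAt (m + 1) := by
        intro m
        have hprev : (ComplexShape.up ℤ).prev (m + 1) = m :=
          (ComplexShape.up ℤ).prev_eq' (by simp)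
        rw [FD.exactAt_iff' m (m + 1) (m + 1 + 1) hprev (hnextn (m + 1)),
          ShortComplex.exact_iff_epi_toCycles]
        rw [← FD.toCycles_cyclesIsoSc'_hom m (m + 1) (m + 1 + 1) hprev (hnextn (m + 1))]
        haveI : Epi (FD.toCycles m (m + 1)) := by
          rw [htoCycles m]
          haveI := hepiF m
          exact @epi_comp _ _ _ _ _ _ (hepiF m) _ _
        exact @epi_comp _ _ _ _ _ _ this _ _
      have hn : n = (n - 1) + 1 := by omega
      rw [hn]
      exact key (n - 1)
    · -- cycles of `FD` are in `𝒟'`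
      intro n
      have hF : F.obj (D.cycles n) ∈ 𝒟' := hobj _ (hcyc n)
      rw [h'.1]
      intro Y hY
      exact subsingleton_ext_of_iso (e n) 1 ((h'.1 _).mp hF Y hY)
end

section
/- (Two-variable case of the cokernel formula for the pushout product.) Let F : 𝒜₁ × 𝒜₂ → 𝒜₀ be an additive functor between abelian categories that is right exact in each variable. Let f₁ : A₁ → B₁ in 𝒜₁ have cokernel C₁ and f₂ : A₂ → B₂ in 𝒜₂ have cokernel C₂. Then the cokernel of the pushout product □_F(f₁, f₂) : F(B₁, A₂) ⊔_{F(A₁, A₂)} F(A₁, B₂) → F(B₁, B₂) is isomorphic to F(C₁, C₂). -/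
open CategoryTheory CategoryTheory.Limits

universe v₀ v₁ v₂ u₀ u₁ u₂

/-- For a bifunctor `F` between abelian categories that is additive and right exact in
each variable, the cokernel of the pushout product
`□_F(f₁, f₂) : F(B₁, A₂) ⊔_{F(A₁, A₂)} F(A₁, B₂) → F(B₁, B₂)`
is isomorphic to `F(coker f₁, coker f₂)`. -/
theorem cokernel_of_pushout_product
    {A₁ : Type u₁} [Category.{v₁} A₁] [Abelian A₁]
    {A₂ : Type u₂} [Category.{v₂} A₂] [Abelian A₂]
    {A₀ : Type u₀} [Category.{v₀} A₀] [Abelian A₀]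
    (F : A₁ ⥤ A₂ ⥤ A₀)
    [∀ X₁ : A₁, (F.obj X₁).Additive] [∀ X₂ : A₂, (F.flip.obj X₂).Additive]
    [∀ X₁ : A₁, PreservesFiniteColimits (F.obj X₁)]
    [∀ X₂ : A₂, PreservesFiniteColimits (F.flip.obj X₂)]
    {A₁' B₁ : A₁} {A₂' B₂ : A₂} (f₁ : A₁' ⟶ B₁) (f₂ : A₂' ⟶ B₂) :
    Nonempty (cokernel (pushout.desc ((F.map f₁).app B₂) ((F.obj B₁).map f₂)
        ((F.map f₁).naturality f₂)) ≅ (F.obj (cokernel f₁)).obj (cokernel f₂)) := by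
  set g := pushout.desc ((F.map f₁).app B₂) ((F.obj B₁).map f₂)
    ((F.map f₁).naturality f₂) with hg
  set π₁ := cokernel.π f₁
  set π₂ := cokernel.π f₂
  set π : (F.obj B₁).obj B₂ ⟶ (F.obj (cokernel f₁)).obj (cokernel f₂) :=
    (F.map π₁).app B₂ ≫ (F.obj (cokernel f₁)).map π₂ with hπ
  -- basic vanishing facts
  have hmap₁ : (F.map f₁).app B₂ ≫ (F.map π₁).app B₂ = 0 := by
    have : (F.flip.obj B₂).map f₁ ≫ (F.flip.obj B₂).map π₁ = 0 := by
      rw [← Functor.map_comp, cokernel.condition, Functor.map_zero]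
    simpa using this
  have hmap₂ : ∀ X₁ : A₁, (F.obj X₁).map f₂ ≫ (F.obj X₁).map π₂ = 0 := fun X₁ => by
    rw [← Functor.map_comp, cokernel.condition, Functor.map_zero]
  have hw : g ≫ π = 0 := by
    apply pushout.hom_ext
    · rw [comp_zero, hg, pushout.inl_desc_assoc, hπ, reassoc_of% hmap₁, zero_comp]
    · rw [comp_zero, hg, pushout.inr_desc_assoc, hπ,
        reassoc_of% ((F.map π₁).naturality f₂), ← Functor.map_comp,
        cokernel.condition, Functor.map_zero, comp_zero]
  -- epi facts
  haveI : Epi ((F.flip.obj A₂').map π₁) := (F.flip.obj A₂').map_epi _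
  haveI : Epi ((F.flip.obj B₂).map π₁) := (F.flip.obj B₂).map_epi _
  haveI : Epi ((F.obj (cokernel f₁)).map π₂) := (F.obj (cokernel f₁)).map_epi _
  have hepiA : Epi ((F.map π₁).app A₂') := by
    show Epi ((F.flip.obj A₂').map π₁); infer_instance
  have hepiB : Epi ((F.map π₁).app B₂) := by
    show Epi ((F.flip.obj B₂).map π₁); infer_instance
  haveI := hepiA; haveI := hepiB
  haveI : Epi π := epi_comp _ _
  -- colimit cokernel coforks from preservation
  have hc₁ : IsColimit (CokernelCofork.ofπ ((F.flip.obj B₂).map π₁)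
      (by rw [← Functor.map_comp, cokernel.condition, Functor.map_zero])) :=
    isColimitOfHasCokernelOfPreservesColimit (F.flip.obj B₂) f₁
  have hc₂ : IsColimit (CokernelCofork.ofπ ((F.obj (cokernel f₁)).map π₂)
      (by rw [← Functor.map_comp, cokernel.condition, Functor.map_zero])) :=
    isColimitOfHasCokernelOfPreservesColimit (F.obj (cokernel f₁)) f₂
  -- build the cokernel cofork on π and show it is a colimit
  have hcolim : IsColimit (CokernelCofork.ofπ π hw) := by
    have h1 : ∀ {Z : A₀} (k : (F.obj B₁).obj B₂ ⟶ Z), g ≫ k = 0 →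
        (F.flip.obj B₂).map f₁ ≫ k = 0 := fun {Z} k hk => by
      have := congrArg (fun t => pushout.inl _ _ ≫ t) hk
      simpa [hg, pushout.inl_desc_assoc] using this
    have h2 : ∀ {Z : A₀} (k : (F.obj B₁).obj B₂ ⟶ Z), g ≫ k = 0 →
        (F.obj B₁).map f₂ ≫ k = 0 := fun {Z} k hk => by
      have := congrArg (fun t => pushout.inr _ _ ≫ t) hk
      simpa [hg, pushout.inr_desc_assoc] using this
    have hvanish : ∀ {Z : A₀} (k : (F.obj B₁).obj B₂ ⟶ Z) (hk : g ≫ k = 0),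
        (F.obj (cokernel f₁)).map f₂ ≫ hc₁.desc (CokernelCofork.ofπ k (h1 k hk)) = 0 := by
      intro Z k hk
      have hfac : (F.map π₁).app B₂ ≫ hc₁.desc (CokernelCofork.ofπ k (h1 k hk)) = k :=
        hc₁.fac (CokernelCofork.ofπ k (h1 k hk)) WalkingParallelPair.one
      rw [← cancel_epi ((F.map π₁).app A₂'), comp_zero,
        ← reassoc_of% ((F.map π₁).naturality f₂), hfac, h2 k hk]
    refine CokernelCofork.IsColimit.ofπ _ _
      (fun {Z} k hk => hc₂.desc (CokernelCofork.ofπ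
        (hc₁.desc (CokernelCofork.ofπ k (h1 k hk))) (hvanish k hk))) ?_ ?_
    · intro Z k hk
      have hfac2 : (F.obj (cokernel f₁)).map π₂ ≫ hc₂.desc (CokernelCofork.ofπ
          (hc₁.desc (CokernelCofork.ofπ k (h1 k hk))) (hvanish k hk)) =
          hc₁.desc (CokernelCofork.ofπ k (h1 k hk)) :=
        hc₂.fac _ WalkingParallelPair.one
      have hfac1 : (F.map π₁).app B₂ ≫ hc₁.desc (CokernelCofork.ofπ k (h1 k hk)) = k :=
        hc₁.fac _ WalkingParallelPair.one
      rw [hπ, Category.assoc, hfac2, hfac1]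
    · intro Z k hk m hm
      rw [← cancel_epi π, hm]
      have hfac2 : (F.obj (cokernel f₁)).map π₂ ≫ hc₂.desc (CokernelCofork.ofπ
          (hc₁.desc (CokernelCofork.ofπ k (h1 k hk))) (hvanish k hk)) =
          hc₁.desc (CokernelCofork.ofπ k (h1 k hk)) :=
        hc₂.fac _ WalkingParallelPair.one
      have hfac1 : (F.map π₁).app B₂ ≫ hc₁.desc (CokernelCofork.ofπ k (h1 k hk)) = k :=
        hc₁.fac _ WalkingParallelPair.one
      rw [hπ, Category.assoc, hfac2, hfac1]
  exact ⟨IsColimit.coconePointUniqueUpToIso (cokernelIsCokernel g) hcolim⟩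
end
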